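/- In LSkT the rule IL⁻¹ is admissible: from a derivation of T[I] ⊢ C one can construct a derivation of T[-] ⊢ C. -/
import Mathlib


/-- Formulae of left skew monoidal closed logic: atoms, unit I, ⊗, ⊸. -/
inductive Fma : Type
  | atom : ℕ → Fma
  | I : Fma
  | tens : Fma → Fma → Fma
  | lolli : Fma → Fma → Fma

/-- Trees: formulae, the empty tree, and pairing. -/
inductive Tr : Type
  | fma : Fma → Tr
  | emp : Tr
  | pair : Tr → Tr → Tr

/-- Contexts: trees with a single hole. -/
inductive Ctx : Type
  | hole : Ctx
  | pairL : Ctx → Tr → Ctx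
  | pairR : Tr → Ctx → Ctx

/-- Substitution of a tree into the hole of a context. -/
def plug : Ctx → Tr → Tr
  | Ctx.hole, U => U
  | Ctx.pairL C T, U => Tr.pair (plug C U) T
  | Ctx.pairR T C, U => Tr.pair T (plug C U)

/-- Derivability in the tree sequent calculus LSkT: `TDer T A` means `T ⊢ A`. -/
inductive TDer : Tr → Fma → Prop
  | ax {A} : TDer (Tr.fma A) A
  | IL {T C} : TDer (plug T Tr.emp) C → TDer (plug T (Tr.fma Fma.I)) C
  | IR : TDer Tr.emp Fma.I
  | tensL {T A B C} : TDer (plug T (Tr.pair (Tr.fma A) (Tr.fma B))) C →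
      TDer (plug T (Tr.fma (Fma.tens A B))) C
  | tensR {T U A B} : TDer T A → TDer U B → TDer (Tr.pair T U) (Fma.tens A B)
  | lolliL {T U A B C} : TDer U A → TDer (plug T (Tr.fma B)) C →
      TDer (plug T (Tr.pair (Tr.fma (Fma.lolli A B)) U)) C
  | lolliR {T A B} : TDer (Tr.pair T (Tr.fma A)) B → TDer T (Fma.lolli A B)
  | assoc {T U₀ U₁ U₂ C} : TDer (plug T (Tr.pair U₀ (Tr.pair U₁ U₂))) C →
      TDer (plug T (Tr.pair (Tr.pair U₀ U₁) U₂)) C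
  | unitL {T U C} : TDer (plug T U) C → TDer (plug T (Tr.pair Tr.emp U)) C
  | unitR {T U C} : TDer (plug T (Tr.pair U Tr.emp)) C → TDer (plug T U) C

/-- Erasure: replace some occurrences of the formula I by the empty tree. -/
inductive Er : Tr → Tr → Prop
  | fma (A) : Er (Tr.fma A) (Tr.fma A)
  | emp : Er Tr.emp Tr.emp
  | Ie : Er (Tr.fma Fma.I) Tr.emp
  | pair {T T' U U'} : Er T T' → Er U U' → Er (Tr.pair T U) (Tr.pair T' U')

theorem Er.rfl : ∀ T, Er T T
  | Tr.fma A => Er.fma A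
  | Tr.emp => Er.emp
  | Tr.pair a b => Er.pair (Er.rfl a) (Er.rfl b)

theorem Er_plug {V V'} (h : Er V V') : ∀ T, Er (plug T V) (plug T V')
  | Ctx.hole => h
  | Ctx.pairL Cx t => Er.pair (Er_plug h Cx) (Er.rfl t)
  | Ctx.pairR t Cx => Er.pair (Er.rfl t) (Er_plug h Cx)

theorem Er_split : ∀ (T : Ctx) {U S'}, Er (plug T U) S' →
    ∃ T' U', S' = plug T' U' ∧ Er U U' ∧
      ∀ V V', Er V V' → Er (plug T V) (plug T' V')
  | Ctx.hole, U, S', h => ⟨Ctx.hole, S', rfl, h, fun _ _ hv => hv⟩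
  | Ctx.pairL Cx t, U, S', h => by
      cases h with
      | pair h1 h2 =>
        obtain ⟨T', U', rfl, hU, hcl⟩ := Er_split Cx h1
        exact ⟨Ctx.pairL T' _, U', rfl, hU, fun V V' hv => Er.pair (hcl V V' hv) h2⟩
  | Ctx.pairR t Cx, U, S', h => by
      cases h with
      | pair h1 h2 =>
        obtain ⟨T', U', rfl, hU, hcl⟩ := Er_split Cx h2
        exact ⟨Ctx.pairR _ T', U', rfl, hU, fun V V' hv => Er.pair h1 (hcl V V' hv)⟩

theorem TDer_of_Er {S C} (d : TDer S C) : ∀ S', Er S S' → TDer S' C := by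
  induction d with
  | ax =>
    intro S' h
    cases h with
    | fma => exact TDer.ax
    | Ie => exact TDer.IR
  | IL h ih =>
    intro S' hS
    obtain ⟨T', U', rfl, hU, hcl⟩ := Er_split _ hS
    cases hU with
    | fma => exact TDer.IL (ih _ (hcl _ _ Er.emp))
    | Ie => exact ih _ (hcl _ _ Er.emp)
  | IR =>
    intro S' h; cases h; exact TDer.IR
  | tensL h ih =>
    intro S' hS
    obtain ⟨T', U', rfl, hU, hcl⟩ := Er_split _ hS
    cases hU with
    | fma => exact TDer.tensL (ih _ (hcl _ _ (Er.pair (Er.fma _) (Er.fma _))))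
  | tensR h1 h2 ih1 ih2 =>
    intro S' hS
    cases hS with
    | pair a b => exact TDer.tensR (ih1 _ a) (ih2 _ b)
  | lolliL h1 h2 ih1 ih2 =>
    intro S' hS
    obtain ⟨T', U', rfl, hU, hcl⟩ := Er_split _ hS
    cases hU with
    | pair ha hb =>
      cases ha with
      | fma => exact TDer.lolliL (ih1 _ hb) (ih2 _ (hcl _ _ (Er.fma _)))
  | lolliR h ih =>
    intro S' hS
    exact TDer.lolliR (ih _ (Er.pair hS (Er.fma _)))
  | assoc h ih =>
    intro S' hS
    obtain ⟨T', U', rfl, hU, hcl⟩ := Er_split _ hS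
    cases hU with
    | pair ha hb =>
      cases ha with
      | pair h0 h1 => exact TDer.assoc (ih _ (hcl _ _ (Er.pair h0 (Er.pair h1 hb))))
  | unitL h ih =>
    intro S' hS
    obtain ⟨T', U', rfl, hU, hcl⟩ := Er_split _ hS
    cases hU with
    | pair ha hb => cases ha; exact TDer.unitL (ih _ (hcl _ _ hb))
  | unitR h ih =>
    intro S' hS
    obtain ⟨T', U', rfl, hU, hcl⟩ := Er_split _ hS
    exact TDer.unitR (ih _ (hcl _ _ (Er.pair hU Er.emp)))

/-- Admissibility of the inverse unit-left rule IL⁻¹ in LSkT. -/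
theorem IL_inv_admissible (T : Ctx) (C : Fma)
    (f : TDer (plug T (Tr.fma Fma.I)) C) : TDer (plug T Tr.emp) C :=
  TDer_of_Er f _ (Er_plug Er.Ie T)
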